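/- Let q : ℝ^d × ℝ^d → ℂ with Re q(x,ξ) ≥ 0 and |q(x,ξ)| ≤ c(1+|ξ|²). Let f be a Schwartz function on ℝ^d with Fourier transform f̂ satisfying ∫ (1+|ξ|²)² |f̂(ξ)| dξ < ∞, and define U_h f(x) = ∫ e^{i x·ξ} e^{-h q(x,ξ)} f̂(ξ) dξ and A f(x) = -∫ e^{i x·ξ} q(x,ξ) f̂(ξ) dξ. Then sup_x |(U_h f(x) - f(x))/h - A f(x)| ≤ c² h ∫ (1+|ξ|²)² |f̂(ξ)| dξ, and in particular U_h f converges uniformly to f and (U_h f - f)/h converges uniformly to A f as h ↓ 0. -/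

import Mathlib

open Complex MeasureTheory RealInnerProductSpace Filter Topology

lemma exp_neg_sub_one_norm {z : ℂ} (hz : 0 ≤ z.re) :
    ‖Complex.exp (-z) - 1‖ ≤ ‖z‖ := by
  have h1 : ∀ s ∈ Set.uIcc (0:ℝ) 1, HasDerivAt (fun t : ℝ => Complex.exp (-(t:ℂ) * z))
      (Complex.exp (-(s:ℂ) * z) * (-z)) s := by
    intro s _
    have h2 : HasDerivAt (fun t : ℝ => -(t:ℂ) * z) (-z) s := by
      simpa using (Complex.ofRealCLM.hasDerivAt (x := s)).neg.mul_const z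
    exact h2.cexp
  have h3 : IntervalIntegrable (fun s : ℝ => Complex.exp (-(s:ℂ) * z) * (-z))
      MeasureTheory.volume 0 1 := by
    apply Continuous.intervalIntegrable
    fun_prop
  have key := intervalIntegral.integral_eq_sub_of_hasDerivAt h1 h3
  simp only [Complex.ofReal_one, Complex.ofReal_zero, neg_zero, zero_mul, Complex.exp_zero,
    neg_mul, one_mul] at key
  have hb : ∀ s ∈ Set.uIoc (0:ℝ) 1, ‖Complex.exp (-((s:ℂ) * z)) * (-z)‖ ≤ ‖z‖ := by
    intro s hs
    rw [Set.uIoc_of_le (by norm_num : (0:ℝ) ≤ 1)] at hs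
    have hs0 : 0 ≤ s := le_of_lt hs.1
    have : ‖Complex.exp (-((s:ℂ) * z))‖ ≤ 1 := by
      rw [Complex.norm_exp]
      apply Real.exp_le_one_iff.mpr
      simp [Complex.mul_re]
      nlinarith
    calc ‖Complex.exp (-((s:ℂ) * z)) * (-z)‖ = ‖Complex.exp (-((s:ℂ) * z))‖ * ‖z‖ := by
          rw [norm_mul, norm_neg]
      _ ≤ 1 * ‖z‖ := by gcongr
      _ = ‖z‖ := by simp
  have := intervalIntegral.norm_integral_le_of_norm_le_const (C := ‖z‖) hb
  rw [key] at this
  simpa using this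

lemma exp_neg_taylor_norm {z : ℂ} (hz : 0 ≤ z.re) :
    ‖Complex.exp (-z) - 1 + z‖ ≤ ‖z‖ ^ 2 := by
  have h1 : ∀ s ∈ Set.uIcc (0:ℝ) 1,
      HasDerivAt (fun t : ℝ => Complex.exp (-(t:ℂ) * z) + (t:ℂ) * z)
      (Complex.exp (-(s:ℂ) * z) * (-z) + z) s := by
    intro s _
    have h2 : HasDerivAt (fun t : ℝ => -(t:ℂ) * z) (-z) s := by
      simpa using (Complex.ofRealCLM.hasDerivAt (x := s)).neg.mul_const z
    have h4 : HasDerivAt (fun t : ℝ => (t:ℂ) * z) z s := by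
      simpa using (Complex.ofRealCLM.hasDerivAt (x := s)).mul_const z
    exact h2.cexp.add h4
  have h3 : IntervalIntegrable (fun s : ℝ => Complex.exp (-(s:ℂ) * z) * (-z) + z)
      MeasureTheory.volume 0 1 := by
    apply Continuous.intervalIntegrable
    fun_prop
  have key := intervalIntegral.integral_eq_sub_of_hasDerivAt h1 h3
  simp only [Complex.ofReal_one, Complex.ofReal_zero, neg_zero, zero_mul, Complex.exp_zero,
    neg_mul, one_mul, add_zero] at key
  have hb : ∀ s ∈ Set.uIoc (0:ℝ) 1, ‖Complex.exp (-((s:ℂ) * z)) * (-z) + z‖ ≤ ‖z‖ ^ 2 := by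
    intro s hs
    rw [Set.uIoc_of_le (by norm_num : (0:ℝ) ≤ 1)] at hs
    have hs0 : 0 ≤ s := le_of_lt hs.1
    have hsz : 0 ≤ ((s:ℂ) * z).re := by simp [Complex.mul_re]; nlinarith
    have h5 : Complex.exp (-((s:ℂ) * z)) * (-z) + z = -((Complex.exp (-((s:ℂ)*z)) - 1) * z) := by
      ring
    rw [h5, norm_neg, norm_mul]
    have h6 := exp_neg_sub_one_norm hsz
    calc ‖Complex.exp (-((s:ℂ)*z)) - 1‖ * ‖z‖ ≤ ‖(s:ℂ) * z‖ * ‖z‖ := by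
          gcongr
      _ = s * (‖z‖ * ‖z‖) := by
          rw [norm_mul, Complex.norm_real, Real.norm_eq_abs, _root_.abs_of_nonneg hs0]; ring
      _ ≤ 1 * (‖z‖ * ‖z‖) := by
          have : 0 ≤ ‖z‖ * ‖z‖ := by positivity
          nlinarith [hs.2]
      _ = ‖z‖ ^ 2 := by ring
  have := intervalIntegral.norm_integral_le_of_norm_le_const (C := ‖z‖ ^ 2) hb
  rw [key] at this
  calc ‖Complex.exp (-z) - 1 + z‖ = ‖Complex.exp (-z) + z - 1‖ := by
        ring_nf
    _ ≤ ‖z‖ ^ 2 := by simpa using this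

/-- Uniform generator approximation for the Euler-scheme transition operators:
`sup_x |(U_h f(x) - f(x))/h - A f(x)| ≤ c² h ∫ (1+|ξ|²)² |f̂(ξ)| dξ`,
and consequently `U_h f → f` and `(U_h f - f)/h → A f` uniformly as `h ↓ 0`. -/
theorem euler_generator_approximation {d : ℕ}
    (q : EuclideanSpace ℝ (Fin d) → EuclideanSpace ℝ (Fin d) → ℂ) (c : ℝ)
    (hc : 0 < c)
    (hre : ∀ x ξ, 0 ≤ (q x ξ).re)
    (hbound : ∀ x ξ, ‖q x ξ‖ ≤ c * (1 + ‖ξ‖ ^ 2))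
    (fh : EuclideanSpace ℝ (Fin d) → ℂ)
    (hfh : Integrable (fun ξ => (1 + ‖ξ‖ ^ 2) ^ 2 * ‖fh ξ‖))
    (f : EuclideanSpace ℝ (Fin d) → ℂ)
    (hf : ∀ x, f x = ∫ ξ, Complex.exp (Complex.I * (⟪x, ξ⟫ : ℝ)) * fh ξ)
    (U : ℝ → EuclideanSpace ℝ (Fin d) → ℂ)
    (hU : ∀ h x, U h x =
      ∫ ξ, Complex.exp (Complex.I * (⟪x, ξ⟫ : ℝ)) *
        Complex.exp (-(h : ℂ) * q x ξ) * fh ξ)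
    (A : EuclideanSpace ℝ (Fin d) → ℂ)
    (hA : ∀ x, A x = -∫ ξ, Complex.exp (Complex.I * (⟪x, ξ⟫ : ℝ)) * q x ξ * fh ξ)
    (hqint : ∀ (h : ℝ) (x), 0 ≤ h → Integrable (fun ξ =>
      Complex.exp (Complex.I * (⟪x, ξ⟫ : ℝ)) *
        Complex.exp (-(h : ℂ) * q x ξ) * fh ξ)) :
    (∀ (h : ℝ), 0 < h → ∀ x,
      ‖(U h x - f x) / h - A x‖ ≤
        c ^ 2 * h * ∫ ξ, (1 + ‖ξ‖ ^ 2) ^ 2 * ‖fh ξ‖) ∧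
    (∀ ε > (0 : ℝ), ∃ δ > (0 : ℝ), ∀ (h : ℝ), 0 < h → h < δ → ∀ x,
      ‖U h x - f x‖ ≤ ε ∧
      ‖(U h x - f x) / h - A x‖ ≤ ε) := by
  set M := ∫ ξ, (1 + ‖ξ‖ ^ 2) ^ 2 * ‖fh ξ‖ with hMdef
  have hM0 : 0 ≤ M := integral_nonneg fun ξ => by positivity
  have habs_e : ∀ (x ξ : EuclideanSpace ℝ (Fin d)),
      ‖Complex.exp (Complex.I * (⟪x, ξ⟫ : ℝ))‖ = 1 := by
    intro x ξ
    rw [Complex.norm_exp]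
    simp [Complex.mul_re]
  have hg0 : ∀ x, Integrable (fun ξ => Complex.exp (Complex.I * (⟪x, ξ⟫ : ℝ)) * fh ξ) := by
    intro x
    have := hqint 0 x le_rfl
    simpa using this
  have hqfh_bound : ∀ (x ξ : EuclideanSpace ℝ (Fin d)),
      ‖Complex.exp (Complex.I * (⟪x, ξ⟫ : ℝ)) * q x ξ * fh ξ‖ ≤
        c * ((1 + ‖ξ‖ ^ 2) ^ 2 * ‖fh ξ‖) := by
    intro x ξ
    have h1 : (1 + ‖ξ‖ ^ 2) ≤ (1 + ‖ξ‖ ^ 2) ^ 2 := by nlinarith [sq_nonneg ‖ξ‖]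
    have h2 := hbound x ξ
    calc ‖Complex.exp (Complex.I * (⟪x, ξ⟫ : ℝ)) * q x ξ * fh ξ‖
        = ‖q x ξ‖ * ‖fh ξ‖ := by
          rw [norm_mul, norm_mul, 
            habs_e, one_mul]
      _ ≤ (c * (1 + ‖ξ‖ ^ 2) ^ 2) * ‖fh ξ‖ := by
          have : ‖q x ξ‖ ≤ c * (1 + ‖ξ‖ ^ 2) ^ 2 := h2.trans (by nlinarith)
          exact mul_le_mul_of_nonneg_right this (norm_nonneg _)
      _ = c * ((1 + ‖ξ‖ ^ 2) ^ 2 * ‖fh ξ‖) := by ring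
  have hg2 : ∀ x, Integrable (fun ξ => Complex.exp (Complex.I * (⟪x, ξ⟫ : ℝ)) * q x ξ * fh ξ) := by
    intro x
    have hmeas : AEStronglyMeasurable
        (fun ξ => Complex.exp (Complex.I * (⟪x, ξ⟫ : ℝ)) * q x ξ * fh ξ) volume := by
      set e : EuclideanSpace ℝ (Fin d) → ℂ := fun ξ => Complex.exp (Complex.I * (⟪x, ξ⟫ : ℝ)) with he
      set w : ℕ → ℂ := fun n => ((1 / (n + 1 : ℝ) : ℝ) : ℂ) with hwdef
      apply aestronglyMeasurable_of_tendsto_ae (u := atTop)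
        (f := fun n : ℕ => fun ξ => (e ξ * fh ξ - e ξ * Complex.exp (-(w n) * q x ξ) * fh ξ) * ((n : ℂ) + 1))
      · intro n
        have hint := hqint (1 / (n + 1 : ℝ)) x (by positivity)
        exact ((hg0 x).sub hint).aestronglyMeasurable.mul_const _
      · filter_upwards with ξ
        set z := q x ξ with hzdef
        have hd : HasDerivAt (fun v : ℂ => Complex.exp (-v * z)) (-z) 0 := by
          have h2 : HasDerivAt (fun v : ℂ => -v * z) (-z) 0 := by
            simpa using ((hasDerivAt_id (0 : ℂ)).neg.mul_const z)
          simpa using h2.cexp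
        have hslope := hasDerivAt_iff_tendsto_slope.mp hd
        have hw0 : Tendsto w atTop (𝓝[≠] (0 : ℂ)) := by
          refine tendsto_nhdsWithin_iff.mpr ⟨?_, ?_⟩
          · have h0 : Tendsto (fun n : ℕ => (1 / (n + 1 : ℝ))) atTop (𝓝 0) :=
              tendsto_one_div_add_atTop_nhds_zero_nat
            have h1 := (Complex.continuous_ofReal.tendsto 0).comp h0
            have : Tendsto w atTop (𝓝 ((0:ℝ):ℂ)) := h1
            simpa using this
          · filter_upwards with n
            simp only [hwdef, Set.mem_compl_iff, Set.mem_singleton_iff]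
            exact Complex.ofReal_ne_zero.mpr (by positivity)
        have h7 := hslope.comp hw0
        have h8 := h7.const_mul (-(e ξ * fh ξ))
        have hlim : -(e ξ * fh ξ) * -z = e ξ * z * fh ξ := by ring
        rw [hlim] at h8
        refine Tendsto.congr (fun n => ?_) h8
        have hn1 : ((n : ℂ) + 1) ≠ 0 := Nat.cast_add_one_ne_zero n
        have hwn : w n = ((n : ℂ) + 1)⁻¹ := by
          simp only [hwdef]
          push_cast
          simp
        simp only [Function.comp, slope_def_field]
        rw [hwn]
        field_simp
        simp only [mul_zero, neg_zero, Complex.exp_zero, sub_zero]; ring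
    exact Integrable.mono' (hfh.const_mul c) hmeas (ae_of_all _ fun ξ => hqfh_bound x ξ)
  -- uniform bound on A
  have hA_bd : ∀ x, ‖A x‖ ≤ c * M := by
    intro x
    rw [hA, norm_neg]
    calc ‖∫ ξ, Complex.exp (Complex.I * (⟪x, ξ⟫ : ℝ)) * q x ξ * fh ξ‖
        ≤ ∫ ξ, ‖Complex.exp (Complex.I * (⟪x, ξ⟫ : ℝ)) * q x ξ * fh ξ‖ := by
          exact norm_integral_le_integral_norm _
      _ ≤ ∫ ξ, c * ((1 + ‖ξ‖ ^ 2) ^ 2 * ‖fh ξ‖) :=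
          integral_mono (hg2 x).norm (hfh.const_mul c) fun ξ => hqfh_bound x ξ
      _ = c * M := integral_const_mul c _
  -- main estimate
  have hmain : ∀ (h : ℝ), 0 < h → ∀ x,
      ‖(U h x - f x) / h - A x‖ ≤ c ^ 2 * h * M := by
    intro h hh x
    have hh0 : (h : ℂ) ≠ 0 := by exact_mod_cast hh.ne'
    have hg1 := hqint h x hh.le
    set G : EuclideanSpace ℝ (Fin d) → ℂ := fun ξ =>
      (Complex.exp (Complex.I * (⟪x, ξ⟫ : ℝ)) * Complex.exp (-(h : ℂ) * q x ξ) * fh ξ -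
        Complex.exp (Complex.I * (⟪x, ξ⟫ : ℝ)) * fh ξ) / (h : ℂ) +
        Complex.exp (Complex.I * (⟪x, ξ⟫ : ℝ)) * q x ξ * fh ξ with hGdef
    have hG : Integrable G := ((hg1.sub (hg0 x)).div_const _).add (hg2 x)
    have hGl : Integrable (fun ξ =>
        (Complex.exp (Complex.I * (⟪x, ξ⟫ : ℝ)) * Complex.exp (-(h : ℂ) * q x ξ) * fh ξ -
          Complex.exp (Complex.I * (⟪x, ξ⟫ : ℝ)) * fh ξ) / (h : ℂ)) :=
      (hg1.sub (hg0 x)).div_const _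
    have hsub : Integrable (fun ξ =>
        Complex.exp (Complex.I * (⟪x, ξ⟫ : ℝ)) * Complex.exp (-(h : ℂ) * q x ξ) * fh ξ -
          Complex.exp (Complex.I * (⟪x, ξ⟫ : ℝ)) * fh ξ) := hg1.sub (hg0 x)
    have heq : (U h x - f x) / h - A x = ∫ ξ, G ξ := by
      rw [hGdef]
      rw [integral_add hGl (hg2 x), integral_div, integral_sub hg1 (hg0 x), hU, hf, hA]
      ring
    rw [heq]
    have hpt : ∀ ξ, ‖G ξ‖ ≤ c ^ 2 * h * ((1 + ‖ξ‖ ^ 2) ^ 2 * ‖fh ξ‖) := by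
      intro ξ
      set z := q x ξ with hzdef
      have hrw : G ξ = Complex.exp (Complex.I * (⟪x, ξ⟫ : ℝ)) * fh ξ *
          ((Complex.exp (-((h : ℂ) * z)) - 1 + (h : ℂ) * z) / (h : ℂ)) := by
        rw [hGdef]
        simp only [neg_mul]
        field_simp
        ring
      have hzre : 0 ≤ ((h : ℂ) * z).re := by
        simp only [Complex.mul_re, Complex.ofReal_re, Complex.ofReal_im, zero_mul, sub_zero]
        exact mul_nonneg hh.le (hre x ξ)
      have htay : ‖Complex.exp (-((h : ℂ) * z)) - 1 + (h : ℂ) * z‖ ≤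
          (h * (c * (1 + ‖ξ‖ ^ 2))) ^ 2 := by
        refine (exp_neg_taylor_norm hzre).trans ?_
        rw [norm_mul, Complex.norm_real, Real.norm_eq_abs, _root_.abs_of_pos hh]
        apply pow_le_pow_left₀ (by positivity)
        exact mul_le_mul_of_nonneg_left (hbound x ξ) hh.le
      rw [hrw]
      rw [norm_mul, norm_mul, 
        habs_e, one_mul, norm_div, Complex.norm_real, Real.norm_eq_abs, _root_.abs_of_pos hh]
      calc ‖fh ξ‖ *
            (‖Complex.exp (-((h : ℂ) * z)) - 1 + (h : ℂ) * z‖ / h)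
          ≤ ‖fh ξ‖ * ((h * (c * (1 + ‖ξ‖ ^ 2))) ^ 2 / h) := by
            gcongr
        _ = c ^ 2 * h * ((1 + ‖ξ‖ ^ 2) ^ 2 * ‖fh ξ‖) := by
            field_simp
    calc ‖∫ ξ, G ξ‖ ≤ ∫ ξ, ‖G ξ‖ := by
          exact norm_integral_le_integral_norm _
      _ ≤ ∫ ξ, c ^ 2 * h * ((1 + ‖ξ‖ ^ 2) ^ 2 * ‖fh ξ‖) :=
          integral_mono hG.norm (hfh.const_mul _) hpt
      _ = c ^ 2 * h * M := integral_const_mul _ _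
  refine ⟨hmain, ?_⟩
  intro ε hε
  set C := c ^ 2 * M + c * M + 1 with hCdef
  have hC0 : 0 < C := by positivity
  refine ⟨min 1 (ε / C), lt_min one_pos (by positivity), ?_⟩
  intro h hh hδ x
  have h1 : h ≤ 1 := le_of_lt (lt_of_lt_of_le hδ (min_le_left _ _))
  have h2 : h < ε / C := lt_of_lt_of_le hδ (min_le_right _ _)
  have h3 : h * C < ε := (lt_div_iff₀ hC0).mp h2
  have hb2 : ‖(U h x - f x) / h - A x‖ ≤ c ^ 2 * h * M := hmain h hh x
  constructor
  · have hUf : U h x - f x = ((U h x - f x) / h - A x) * h + A x * h := by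
      have : (h : ℂ) ≠ 0 := by exact_mod_cast hh.ne'
      field_simp
      ring
    rw [hUf]
    calc ‖((U h x - f x) / h - A x) * h + A x * h‖
        ≤ ‖((U h x - f x) / h - A x) * h‖ + ‖A x * h‖ :=
          norm_add_le _ _
      _ = ‖(U h x - f x) / h - A x‖ * h + ‖A x‖ * h := by
          rw [norm_mul, norm_mul, Complex.norm_real, Real.norm_eq_abs, _root_.abs_of_pos hh]
      _ ≤ (c ^ 2 * h * M) * h + (c * M) * h := by
          gcongr
          exact hA_bd x
      _ ≤ h * C := by
          rw [hCdef]
          nlinarith [hM0, sq_nonneg c, mul_nonneg (mul_nonneg (sq_nonneg c) hM0) hh.le]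
      _ ≤ ε := le_of_lt h3
  · calc ‖(U h x - f x) / h - A x‖ ≤ c ^ 2 * h * M := hb2
      _ ≤ h * C := by rw [hCdef]; nlinarith [hM0, mul_nonneg hc.le hM0]
      _ ≤ ε := le_of_lt h3
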